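/- For any two 3×3 real matrices η and τ, ‖cof η − cof τ‖∞ ≤ 4 (‖η‖∞ + ‖τ‖∞) ‖η − τ‖∞, where ‖M‖∞ = max_{i,j} |M_{ij}| is the entrywise sup norm. -/

import Mathlib

open Matrix

lemma cof_key (a b c d a' b' c' d' E F D : ℝ)
    (ha : |a| ≤ E) (hbb : |b| ≤ E) (hc : |c| ≤ E) (hd : |d| ≤ E)
    (ha' : |a'| ≤ F) (hb' : |b'| ≤ F) (hc' : |c'| ≤ F) (hd' : |d'| ≤ F)
    (h1 : |a - a'| ≤ D) (h2 : |b - b'| ≤ D) (h3 : |c - c'| ≤ D) (h4 : |d - d'| ≤ D) :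
    |a * d - b * c - (a' * d' - b' * c')| ≤ 2 * (E + F) * D := by
  have hD : 0 ≤ D := le_trans (abs_nonneg _) h1
  have hE0 : 0 ≤ E := le_trans (abs_nonneg _) ha
  have hF0 : 0 ≤ F := le_trans (abs_nonneg _) ha'
  have e : a * d - b * c - (a' * d' - b' * c')
      = a * (d - d') + (a - a') * d' - (b * (c - c') + (b - b') * c') := by ring
  rw [e]
  have t1 : |a * (d - d')| ≤ E * D := by
    rw [abs_mul]; exact mul_le_mul ha h4 (abs_nonneg _) hE0
  have t2 : |(a - a') * d'| ≤ D * F := by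
    rw [abs_mul]; exact mul_le_mul h1 hd' (abs_nonneg _) hD
  have t3 : |b * (c - c')| ≤ E * D := by
    rw [abs_mul]; exact mul_le_mul hbb h3 (abs_nonneg _) hE0
  have t4 : |(b - b') * c'| ≤ D * F := by
    rw [abs_mul]; exact mul_le_mul h2 hc' (abs_nonneg _) hD
  calc |a * (d - d') + (a - a') * d' - (b * (c - c') + (b - b') * c')|
      ≤ |a * (d - d') + (a - a') * d'| + |b * (c - c') + (b - b') * c'| := abs_sub _ _
    _ ≤ (|a * (d - d')| + |(a - a') * d'|) + (|b * (c - c')| + |(b - b') * c'|) := by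
        gcongr <;> exact abs_add_le _ _
    _ ≤ 2 * (E + F) * D := by nlinarith

/-- For `3 × 3` real matrices `η`, `τ`, the cofactor matrices satisfy
`‖cof η - cof τ‖∞ ≤ 4 (‖η‖∞ + ‖τ‖∞) ‖η - τ‖∞` in the entrywise sup norm,
where `cof M = (adjugate M)ᵀ`. -/
theorem cof_sub_three_dim (η τ : Matrix (Fin 3) (Fin 3) ℝ) :
    (⨆ i : Fin 3, ⨆ j : Fin 3, |((η.adjugate)ᵀ - (τ.adjugate)ᵀ) i j|) ≤
      4 * ((⨆ i : Fin 3, ⨆ j : Fin 3, |η i j|) + (⨆ i : Fin 3, ⨆ j : Fin 3, |τ i j|)) *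
        ⨆ i : Fin 3, ⨆ j : Fin 3, |(η - τ) i j| := by
  have hb : ∀ (f : Fin 3 → ℝ), BddAbove (Set.range f) := fun f => Finite.bddAbove_range f
  set E := (⨆ i : Fin 3, ⨆ j : Fin 3, |η i j|) with hEdef
  set F := (⨆ i : Fin 3, ⨆ j : Fin 3, |τ i j|) with hFdef
  set D := (⨆ i : Fin 3, ⨆ j : Fin 3, |(η - τ) i j|) with hDdef
  have hE : ∀ i j, |η i j| ≤ E := fun i j =>
    le_trans (le_ciSup (hb fun j => |η i j|) j)
      (le_ciSup (hb fun i => ⨆ j, |η i j|) i)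
  have hF : ∀ i j, |τ i j| ≤ F := fun i j =>
    le_trans (le_ciSup (hb fun j => |τ i j|) j)
      (le_ciSup (hb fun i => ⨆ j, |τ i j|) i)
  have hD : ∀ i j, |η i j - τ i j| ≤ D := fun i j => by
    have : |(η - τ) i j| ≤ D :=
      le_trans (le_ciSup (hb fun j => |(η - τ) i j|) j)
        (le_ciSup (hb fun i => ⨆ j, |(η - τ) i j|) i)
    simpa using this
  have hD0 : (0:ℝ) ≤ D := le_trans (abs_nonneg _) (hD 0 0)
  have hE0 : (0:ℝ) ≤ E := le_trans (abs_nonneg _) (hE 0 0)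
  have hF0 : (0:ℝ) ≤ F := le_trans (abs_nonneg _) (hF 0 0)
  refine ciSup_le fun i => ciSup_le fun j => ?_
  simp only [Matrix.sub_apply, transpose_apply]
  rw [adjugate_fin_succ_eq_det_submatrix η, adjugate_fin_succ_eq_det_submatrix τ,
    ← mul_sub, abs_mul, abs_pow, abs_neg, abs_one, one_pow, one_mul,
    det_fin_two, det_fin_two]
  simp only [submatrix_apply]
  calc |η (i.succAbove 0) (j.succAbove 0) * η (i.succAbove 1) (j.succAbove 1) -
        η (i.succAbove 0) (j.succAbove 1) * η (i.succAbove 1) (j.succAbove 0) -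
        (τ (i.succAbove 0) (j.succAbove 0) * τ (i.succAbove 1) (j.succAbove 1) -
        τ (i.succAbove 0) (j.succAbove 1) * τ (i.succAbove 1) (j.succAbove 0))|
      ≤ 2 * (E + F) * D :=
        cof_key _ _ _ _ _ _ _ _ _ _ _ (hE _ _) (hE _ _) (hE _ _) (hE _ _)
          (hF _ _) (hF _ _) (hF _ _) (hF _ _) (hD _ _) (hD _ _) (hD _ _) (hD _ _)
    _ ≤ 4 * (E + F) * D := by nlinarith
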